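/- Fix an integer n ≥ 1. Let T̃_n = {((y₁, y₂), (u₁, u₂)) ∈ (ℂ² ∖ {0}) × ℂ² : u₁y₁ⁿ = u₂y₂ⁿ} with the ℂ* action λ: ((y₁, y₂), (u₁, u₂)) ↦ ((λy₁, λy₂), (u₁, u₂)), and let Ỹ_n = {((y₁, y₂), (x₁, x₂)) ∈ (ℂ² ∖ {0}) × ℂ² : x₁y₁^{n−1} = x₂y₂^{n−1}} with the ℂ* action λ: ((y₁, y₂), (x₁, x₂)) ↦ ((λy₁, λy₂), (λ^{-1}x₁, λ^{-1}x₂)). Then the map Ỹ_n → T̃_n given by ((y₁, y₂), (x₁, x₂)) ↦ ((y₁, y₂), (x₁y₂, x₂y₁)) is well defined, ℂ*-equivariant, and induces a bijection between the orbit sets Ỹ_n/ℂ* and T̃_n/ℂ*. -/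

import Mathlib

/-- Points of `Ỹ_n = {((y₁,y₂),(x₁,x₂)) : (y₁,y₂) ≠ 0, x₁y₁^{n−1} = x₂y₂^{n−1}}`. -/
def YSub (n : ℕ) :=
  {p : (ℂ × ℂ) × ℂ × ℂ // p.1 ≠ 0 ∧ p.2.1 * p.1.1 ^ (n - 1) = p.2.2 * p.1.2 ^ (n - 1)}

/-- Points of `T̃_n = {((y₁,y₂),(u₁,u₂)) : (y₁,y₂) ≠ 0, u₁y₁ⁿ = u₂y₂ⁿ}`. -/
def TSub (n : ℕ) :=
  {p : (ℂ × ℂ) × ℂ × ℂ // p.1 ≠ 0 ∧ p.2.1 * p.1.1 ^ n = p.2.2 * p.1.2 ^ n}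

/-- The orbit relation on `Ỹ_n`: λ·((y₁,y₂),(x₁,x₂)) = ((λy₁,λy₂),(λ⁻¹x₁,λ⁻¹x₂)). -/
def relY (n : ℕ) : YSub n → YSub n → Prop := fun p p' =>
  ∃ lam : ℂ, lam ≠ 0 ∧
    p'.1.1 = (lam * p.1.1.1, lam * p.1.1.2) ∧
    p'.1.2 = (lam⁻¹ * p.1.2.1, lam⁻¹ * p.1.2.2)

/-- The orbit relation on `T̃_n`: λ·((y₁,y₂),(u₁,u₂)) = ((λy₁,λy₂),(u₁,u₂)). -/
def relT (n : ℕ) : TSub n → TSub n → Prop := fun p p' =>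
  ∃ lam : ℂ, lam ≠ 0 ∧
    p'.1.1 = (lam * p.1.1.1, lam * p.1.1.2) ∧ p'.1.2 = p.1.2

def gmap (n : ℕ) (hn : 1 ≤ n) (p : YSub n) : TSub n :=
  ⟨(p.1.1, (p.1.2.1 * p.1.1.2, p.1.2.2 * p.1.1.1)), p.2.1, by
    have h := p.2.2
    have hp1 : p.1.1.1 ^ n = p.1.1.1 ^ (n-1) * p.1.1.1 := by rw [← pow_succ]; congr 1; omega
    have hp2 : p.1.1.2 ^ n = p.1.1.2 ^ (n-1) * p.1.1.2 := by rw [← pow_succ]; congr 1; omega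
    show p.1.2.1 * p.1.1.2 * p.1.1.1 ^ n = p.1.2.2 * p.1.1.1 * p.1.1.2 ^ n
    rw [hp1, hp2]
    linear_combination (p.1.1.1 * p.1.1.2) * h⟩

lemma equivT (n : ℕ) : Equivalence (relT n) := by
  constructor
  · intro p; exact ⟨1, one_ne_zero, by simp, rfl⟩
  · rintro p q ⟨l, hl, h1, h2⟩
    exact ⟨l⁻¹, inv_ne_zero hl, by rw [h1]; field_simp, h2.symm⟩
  · rintro p q r ⟨l, hl, h1, h2⟩ ⟨m, hm, h3, h4⟩
    exact ⟨m * l, mul_ne_zero hm hl, by rw [h3, h1]; ring_nf, h4.trans h2⟩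

lemma gequiv (n : ℕ) (hn : 1 ≤ n) (p p' : YSub n) (h : relY n p p') :
    relT n (gmap n hn p) (gmap n hn p') := by
  obtain ⟨l, hl, h1, h2⟩ := h
  refine ⟨l, hl, ?_, ?_⟩
  · show p'.1.1 = _; rw [h1]; rfl
  · show (p'.1.2.1 * p'.1.1.2, p'.1.2.2 * p'.1.1.1) =
      (p.1.2.1 * p.1.1.2, p.1.2.2 * p.1.1.1)
    rw [h1, h2]
    simp only [Prod.mk.injEq]
    constructor <;> field_simp <;> ring

lemma ginj (n : ℕ) (hn : 1 ≤ n) (p q : YSub n) (h : relT n (gmap n hn p) (gmap n hn q)) :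
    relY n p q := by
  obtain ⟨l, hl, h1, h2⟩ := h
  have h1' : q.1.1 = (l * p.1.1.1, l * p.1.1.2) := h1
  have h2' : (q.1.2.1 * q.1.1.2, q.1.2.2 * q.1.1.1) =
      (p.1.2.1 * p.1.1.2, p.1.2.2 * p.1.1.1) := h2
  obtain ⟨hy1, hy2⟩ := Prod.mk.injEq .. ▸ h1'
  obtain ⟨hu1, hu2⟩ := Prod.mk.injEq .. ▸ h2'
  -- notation
  set y1 := p.1.1.1; set y2 := p.1.1.2
  set x1 := p.1.2.1; set x2 := p.1.2.2
  set x1' := q.1.2.1; set x2' := q.1.2.2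
  have hp := p.2.2
  have hq := q.2.2
  rw [hy1, hy2, mul_pow, mul_pow] at hq
  have hln : (l : ℂ) ^ (n-1) ≠ 0 := pow_ne_zero _ hl
  have hq' : x1' * y1 ^ (n-1) = x2' * y2 ^ (n-1) :=
    mul_left_cancel₀ hln (by linear_combination hq)
  rw [hy2] at hu1
  rw [hy1] at hu2
  have key : l * x1' = x1 ∧ l * x2' = x2 := by
    have hy : y1 ≠ 0 ∨ y2 ≠ 0 := by
      by_contra hc
      push_neg at hc
      exact p.2.1 (Prod.ext hc.1 hc.2)
    rcases hy with hy | hy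
    · have e2 : l * x2' = x2 :=
        mul_right_cancel₀ hy (by linear_combination hu2)
      refine ⟨?_, e2⟩
      have hyn : y1 ^ (n-1) ≠ 0 := pow_ne_zero _ hy
      apply mul_right_cancel₀ hyn
      linear_combination l * hq' + y2 ^ (n-1) * e2 - hp
    · have e1 : l * x1' = x1 := by
        apply mul_right_cancel₀ hy
        linear_combination hu1
      refine ⟨e1, ?_⟩
      have hyn : y2 ^ (n-1) ≠ 0 := pow_ne_zero _ hy
      apply mul_right_cancel₀ hyn
      linear_combination (-l) * hq' + y1 ^ (n-1) * e1 + hp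
  refine ⟨l, hl, h1', ?_⟩
  have : q.1.2 = (x1', x2') := rfl
  rw [this, Prod.mk.injEq]
  constructor
  · field_simp; linear_combination key.1
  · field_simp; linear_combination key.2

lemma gsurj (n : ℕ) (hn : 1 ≤ n) (q : TSub n) : ∃ p : YSub n, gmap n hn p = q := by
  obtain ⟨⟨⟨y1, y2⟩, u1, u2⟩, hy, hu⟩ := q
  simp only at hu
  have hy' : y1 ≠ 0 ∨ y2 ≠ 0 := by
    by_contra hc
    push_neg at hc
    exact hy (Prod.ext hc.1 hc.2)
  have hpow1 : y1 ^ n = y1 ^ (n-1) * y1 := by rw [← pow_succ]; congr 1; omega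
  have hpow2 : y2 ^ n = y2 ^ (n-1) * y2 := by rw [← pow_succ]; congr 1; omega
  rcases hy' with h | h
  · refine ⟨⟨((y1, y2), (u2 * y2 ^ (n-1) / y1 ^ n, u2 / y1)), hy, ?_⟩, ?_⟩
    · show u2 * y2 ^ (n-1) / y1 ^ n * y1 ^ (n-1) = u2 / y1 * y2 ^ (n-1)
      rw [hpow1]
      field_simp
    · apply Subtype.ext
      show ((y1, y2), (u2 * y2 ^ (n-1) / y1 ^ n * y2, u2 / y1 * y1)) = ((y1, y2), (u1, u2))
      have e1 : u2 * y2 ^ (n-1) / y1 ^ n * y2 = u1 := by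
        rw [hpow2] at hu
        field_simp
        linear_combination hu.symm
      have e2 : u2 / y1 * y1 = u2 := by field_simp
      rw [e1, e2]
  · refine ⟨⟨((y1, y2), (u1 / y2, u1 * y1 ^ (n-1) / y2 ^ n)), hy, ?_⟩, ?_⟩
    · show u1 / y2 * y1 ^ (n-1) = u1 * y1 ^ (n-1) / y2 ^ n * y2 ^ (n-1)
      rw [hpow2]
      field_simp
    · apply Subtype.ext
      show ((y1, y2), (u1 / y2 * y2, u1 * y1 ^ (n-1) / y2 ^ n * y1)) = ((y1, y2), (u1, u2))
      have e1 : u1 / y2 * y2 = u1 := by field_simp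
      have e2 : u1 * y1 ^ (n-1) / y2 ^ n * y1 = u2 := by
        rw [hpow1] at hu
        field_simp
        linear_combination hu
      rw [e1, e2]

/-- the map ((y₁,y₂),(x₁,x₂)) ↦ ((y₁,y₂),(x₁y₂,x₂y₁)) is a well-defined,
ℂ*-equivariant map Ỹ_n → T̃_n inducing a bijection Ỹ_n/ℂ* → T̃_n/ℂ*. -/
theorem stmt17 (n : ℕ) (hn : 1 ≤ n) :
    ∃ g : YSub n → TSub n,
      (∀ p, (g p).1 = (p.1.1, (p.1.2.1 * p.1.1.2, p.1.2.2 * p.1.1.1))) ∧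
      (∀ p p', relY n p p' → relT n (g p) (g p')) ∧
      ∃ f : Quot (relY n) → Quot (relT n),
        Function.Bijective f ∧ ∀ p, f (Quot.mk (relY n) p) = Quot.mk (relT n) (g p) := by
  refine ⟨gmap n hn, fun p => rfl, gequiv n hn, 
    Quot.lift (fun p => Quot.mk (relT n) (gmap n hn p))
      (fun a b h => Quot.sound (gequiv n hn a b h)), ⟨?_, ?_⟩, fun p => rfl⟩
  · intro a b
    induction a using Quot.ind with | _ p =>
    induction b using Quot.ind with | _ q =>
    intro h
    simp only [Quot.lift_mk] at h
    rw [Quot.eq] at h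
    have := (Equivalence.eqvGen_iff (equivT n)).mp h
    exact Quot.sound (ginj n hn p q this)
  · intro b
    induction b using Quot.ind with | _ q =>
    obtain ⟨p, hp⟩ := gsurj n hn q
    exact ⟨Quot.mk _ p, by simp [hp]⟩
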